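/- Eilenberg–Zilber lemma: in any simplicial set X, every simplex x ∈ Xₙ can be written uniquely as x = X(σ)(y) where σ : [n] ↠ [m] is a surjective order-preserving map and y ∈ Xₘ is a non-degenerate simplex. -/

import Mathlib

open CategoryTheory Simplicial Opposite

/-- A simplex `y ∈ Xₘ` is non-degenerate if it is not in the image of `X(τ)` for any
surjection `τ : [m] ↠ [k]` with `k < m`. -/
def SSet.IsNondegenerate (X : SSet.{u}) {m : ℕ} (y : X _⦋m⦌) : Prop :=
  ∀ (k : ℕ), k < m → ∀ (τ : (⦋m⦌ : SimplexCategory) ⟶ ⦋k⦌), Epi τ →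
    ∀ z : X _⦋k⦌, X.map τ.op z ≠ y

namespace EZAux

/-- Epi-mono factorization with numeric middle object. -/
lemma exists_factor {a b : ℕ} (f : (⦋a⦌ : SimplexCategory) ⟶ ⦋b⦌) :
    ∃ (k : ℕ) (e : (⦋a⦌ : SimplexCategory) ⟶ ⦋k⦌) (i : (⦋k⦌ : SimplexCategory) ⟶ ⦋b⦌),
      Epi e ∧ Mono i ∧ e ≫ i = f := by
  refine ⟨(Limits.image f).len,
    Limits.factorThruImage f ≫ eqToHom (SimplexCategory.mk_len _).symm,
    eqToHom (SimplexCategory.mk_len _) ≫ Limits.image.ι f, ?_, ?_, by simp⟩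
  · exact epi_comp _ _
  · exact mono_comp _ _

lemma nondeg_mono (X : SSet.{u}) {m p : ℕ} (w : X _⦋p⦌) (y : X _⦋m⦌)
    (hy : X.IsNondegenerate y) (f : (⦋m⦌ : SimplexCategory) ⟶ ⦋p⦌)
    (h : X.map f.op w = y) : Mono f := by
  obtain ⟨k, e, i, he, hi, hf⟩ := exists_factor f
  have hk : k ≤ m := @SimplexCategory.le_of_epi _ _ e he
  have key : X.map e.op (X.map i.op w) = y := by
    rw [← FunctorToTypes.map_comp_apply, ← op_comp, hf, h]
  rcases lt_or_eq_of_le hk with hlt | rfl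
  · exact absurd key (hy k hlt e he _)
  · have : e = 𝟙 _ := SimplexCategory.eq_id_of_epi e
    rw [this, Category.id_comp] at hf
    rwa [← hf]

/-- A section of an epi hitting a prescribed element `i`. -/
lemma exists_section {n m : ℕ} (σ : (⦋n⦌ : SimplexCategory) ⟶ ⦋m⦌) (hσ : Epi σ)
    (i : Fin (n + 1)) :
    ∃ s : (⦋m⦌ : SimplexCategory) ⟶ ⦋n⦌,
      s ≫ σ = 𝟙 _ ∧ s.toOrderHom (σ.toOrderHom i) = i := by
  have hsurj : Function.Surjective σ.toOrderHom :=
    SimplexCategory.epi_iff_surjective.mp hσ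
  classical
  have hne : ∀ j : Fin (m + 1), (Finset.univ.filter fun t => σ.toOrderHom t = j).Nonempty := by
    intro j
    obtain ⟨t, ht⟩ := hsurj j
    exact ⟨t, by simpa using ht⟩
  set mf : Fin (m + 1) → Fin (n + 1) := fun j => (Finset.univ.filter
    fun t => σ.toOrderHom t = j).min' (hne j) with hmf
  have hmem : ∀ j, σ.toOrderHom (mf j) = j := by
    intro j
    have := Finset.min'_mem _ (hne j)
    simpa [hmf] using this
  have hlt : ∀ j j' : Fin (m + 1), j < j' → mf j < mf j' := by
    intro j j' hjj'
    by_contra hle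
    push_neg at hle
    have := σ.toOrderHom.monotone hle
    rw [hmem, hmem] at this
    exact absurd hjj' (not_lt.mpr this)
  set g : Fin (m + 1) → Fin (n + 1) := fun j => if j = σ.toOrderHom i then i else mf j with hg
  have hmono : Monotone g := by
    intro j j' hjj'
    rcases eq_or_lt_of_le hjj' with rfl | hjj'
    · exact le_rfl
    by_cases hj : j = σ.toOrderHom i
    · by_cases hj' : j' = σ.toOrderHom i
      · exact absurd (hj.trans hj'.symm) (ne_of_lt hjj')
      · simp only [hg, if_pos hj, if_neg hj']
        by_contra hle
        push_neg at hle
        have := σ.toOrderHom.monotone hle.le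
        rw [hmem] at this
        rw [← hj] at this
        exact absurd hjj' (not_lt.mpr this)
    · by_cases hj' : j' = σ.toOrderHom i
      · simp only [hg, if_neg hj, if_pos hj']
        by_contra hle
        push_neg at hle
        have := σ.toOrderHom.monotone hle.le
        rw [hmem] at this
        rw [hj'] at hjj'
        exact absurd hjj' (not_lt.mpr this)
      · simp only [hg, if_neg hj, if_neg hj']
        exact (hlt j j' hjj').le
  refine ⟨SimplexCategory.mkHom ⟨g, hmono⟩, ?_, ?_⟩
  · apply SimplexCategory.Hom.ext
    apply OrderHom.ext
    funext j
    show σ.toOrderHom (g j) = j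
    by_cases hj : j = σ.toOrderHom i
    · simp only [hg, if_pos hj]
      exact hj.symm
    · simp only [hg, if_neg hj]
      exact hmem j
  · show g (σ.toOrderHom i) = i
    simp [hg]

lemma epi_eq (X : SSet.{u}) {n m : ℕ} (y : X _⦋m⦌) (hy : X.IsNondegenerate y)
    (σ σ' : (⦋n⦌ : SimplexCategory) ⟶ ⦋m⦌) (hσ : Epi σ) (hσ' : Epi σ')
    (h : X.map σ.op y = X.map σ'.op y) : σ = σ' := by
  apply SimplexCategory.Hom.ext
  apply OrderHom.ext
  funext i
  obtain ⟨s, hs, hsi⟩ := exists_section σ' hσ' i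
  have hy' : X.map (s ≫ σ).op y = y := by
    rw [op_comp, FunctorToTypes.map_comp_apply, h, ← FunctorToTypes.map_comp_apply,
      ← op_comp, hs]
    simp
  have := nondeg_mono X y y hy (s ≫ σ) hy'
  have hid : s ≫ σ = 𝟙 _ := SimplexCategory.eq_id_of_mono _
  have h2 : σ.toOrderHom (s.toOrderHom (σ'.toOrderHom i)) = σ'.toOrderHom i := by
    have := congrArg (fun f => SimplexCategory.Hom.toOrderHom f (σ'.toOrderHom i)) hid
    simpa using this
  rw [hsi] at h2
  exact h2

lemma existence (X : SSet.{u}) (n : ℕ) (x : X _⦋n⦌) :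
    ∃ (m : ℕ) (σ : (⦋n⦌ : SimplexCategory) ⟶ ⦋m⦌) (y : X _⦋m⦌),
      Epi σ ∧ X.IsNondegenerate y ∧ X.map σ.op y = x := by
  induction n using Nat.strong_induction_on with
  | _ n IH =>
    by_cases h : X.IsNondegenerate x
    · exact ⟨n, 𝟙 _, x, inferInstance, h, by simp⟩
    · rw [SSet.IsNondegenerate] at h
      push_neg at h
      obtain ⟨k, hk, τ, hτ, z, hz⟩ := h
      obtain ⟨m, σ, y, hσ, hy, hxy⟩ := IH k hk z
      refine ⟨m, τ ≫ σ, y, @epi_comp _ _ _ _ _ _ hτ _ hσ, hy, ?_⟩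
      rw [op_comp, FunctorToTypes.map_comp_apply, hxy, hz]

end EZAux

/-- Eilenberg–Zilber lemma: every simplex `x ∈ Xₙ` of a simplicial set can be written
uniquely as `x = X(σ)(y)` with `σ : [n] ↠ [m]` a surjective order-preserving map and
`y ∈ Xₘ` non-degenerate. -/
theorem eilenberg_zilber (X : SSet.{u}) (n : ℕ) (x : X _⦋n⦌) :
    ∃! p : Σ (m : ℕ), ((⦋n⦌ : SimplexCategory) ⟶ ⦋m⦌) × X _⦋m⦌,
      Epi p.2.1 ∧ X.IsNondegenerate p.2.2 ∧ X.map p.2.1.op p.2.2 = x := by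
  obtain ⟨m, σ, y, hσ, hy, hxy⟩ := EZAux.existence X n x
  refine ⟨⟨m, σ, y⟩, ⟨hσ, hy, hxy⟩, ?_⟩
  rintro ⟨m', σ', y'⟩ ⟨hσ', hy', hxy'⟩
  -- first show m' = m
  have key : ∀ {a b : ℕ} (σa : (⦋n⦌ : SimplexCategory) ⟶ ⦋a⦌)
      (σb : (⦋n⦌ : SimplexCategory) ⟶ ⦋b⦌) (ya : X _⦋a⦌) (yb : X _⦋b⦌),
      Epi σa → Epi σb → X.IsNondegenerate yb →
      X.map σa.op ya = X.map σb.op yb →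
      ∃ f : (⦋b⦌ : SimplexCategory) ⟶ ⦋a⦌, Mono f ∧ X.map f.op ya = yb := by
    intro a b σa σb ya yb hea heb hnb heq
    obtain ⟨s, hs, -⟩ := EZAux.exists_section σb heb 0
    have hfb : X.map (s ≫ σa).op ya = yb := by
      rw [op_comp, FunctorToTypes.map_comp_apply, heq, ← FunctorToTypes.map_comp_apply,
        ← op_comp, hs]
      simp
    exact ⟨s ≫ σa, EZAux.nondeg_mono X ya yb hnb _ hfb, hfb⟩
  obtain ⟨f, hf, hfy⟩ := key σ σ' y y' hσ hσ' hy' (hxy.trans hxy'.symm)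
  obtain ⟨f', hf', hfy'⟩ := key σ' σ y' y hσ' hσ hy (hxy'.trans hxy.symm)
  have hmm : m' = m := le_antisymm (@SimplexCategory.le_of_mono _ _ f hf)
    (@SimplexCategory.le_of_mono _ _ f' hf')
  subst hmm
  have : f = 𝟙 _ := SimplexCategory.eq_id_of_mono f
  rw [this] at hfy
  simp at hfy
  -- hfy : y = y'
  subst hfy
  have : σ' = σ := EZAux.epi_eq X y hy' σ' σ hσ' hσ (hxy'.trans hxy.symm)
  rw [this]
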